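/- Let I be a left ideal of the free associative ring ℤ⟨X⟩ generated, as a left ideal, by a subset S of the subring Γ generated by all left-normed commutators in the generators. Then I ∩ Γ = Γ·S, the left ideal of Γ generated by S. -/

import Mathlib

/-- Commutator `[a,b] = a*b - b*a`. -/
def br {R : Type*} [Ring R] (a b : R) : R := a * b - b * a

/-- The free unital associative ring `ℤ⟨X⟩` on countably many generators. -/
abbrev FreeRing' : Type := FreeAlgebra ℤ ℕ

/-- The generator `x_i`. -/
noncomputable def x (i : ℕ) : FreeRing' := FreeAlgebra.ι ℤ i

/-- The unital subring `Γ` of `ℤ⟨X⟩` generated by all left-normed commutators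
`[x_{i1}, ..., x_{il}]` of the free generators, of length `l ≥ 2`. -/
noncomputable def Gamma : Subring FreeRing' :=
  Subring.closure
    {g | ∃ (i j : ℕ) (rest : List ℕ),
      g = rest.foldl (fun acc m => br acc (x m)) (br (x i) (x j))}

open MulOpposite Finsupp

abbrev MM : Type := List ℕ →₀ FreeRing'

noncomputable def sfun : List ℕ → FreeRing' → MM
  | [], c => Finsupp.single [] c
  | j :: w, c => Finsupp.mapDomain (List.cons j) (sfun w c) + sfun w (br c (x j))

noncomputable def tfun (k : ℕ) : List ℕ → MM
  | [] => Finsupp.single [k] 1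
  | j :: w =>
    if k ≤ j then Finsupp.single (k :: j :: w) 1
    else Finsupp.mapDomain (List.cons j) (tfun k w) + sfun w (br (x k) (x j))

noncomputable def rml (v : MM) : FreeRing' →ₗ[FreeRing'ᵐᵒᵖ] MM where
  toFun γ := op γ • v
  map_add' a b := by simp [op_add, add_smul]
  map_smul' m γ := by
    change op (γ * m.unop) • v = m • (op γ • v)
    rw [op_mul, op_unop, mul_smul]

noncomputable def Cop (j : ℕ) : MM →ₗ[FreeRing'ᵐᵒᵖ] MM where
  toFun := Finsupp.mapDomain (List.cons j)
  map_add' _ _ := Finsupp.mapDomain_add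
  map_smul' _ _ := Finsupp.mapDomain_smul _ _

noncomputable def SOp (c : FreeRing') : MM →ₗ[FreeRing'ᵐᵒᵖ] MM :=
  Finsupp.lsum ℤ (fun w => rml (sfun w c))

noncomputable def TOp (k : ℕ) : MM →ₗ[FreeRing'ᵐᵒᵖ] MM :=
  Finsupp.lsum ℤ (fun w => rml (tfun k w))

@[simp] lemma SOp_single (c : FreeRing') (w : List ℕ) (γ : FreeRing') :
    SOp c (Finsupp.single w γ) = op γ • sfun w c := by
  simp [SOp, rml]

@[simp] lemma TOp_single (k : ℕ) (w : List ℕ) (γ : FreeRing') :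
    TOp k (Finsupp.single w γ) = op γ • tfun k w := by
  simp [TOp, rml]

@[simp] lemma Cop_single (j : ℕ) (w : List ℕ) (γ : FreeRing') :
    Cop j (Finsupp.single w γ) = Finsupp.single (j :: w) γ := by
  simp [Cop, Finsupp.mapDomain_single]

lemma single_eq_op_smul (w : List ℕ) (γ : FreeRing') :
    Finsupp.single w γ = op γ • Finsupp.single w (1 : FreeRing') := by
  rw [Finsupp.smul_single, op_smul_eq_mul, one_mul]

lemma mop_ext {F G : MM →ₗ[FreeRing'ᵐᵒᵖ] MM}
    (h : ∀ w, F (Finsupp.single w 1) = G (Finsupp.single w 1)) : F = G := by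
  refine Finsupp.lhom_ext (fun w γ => ?_)
  rw [single_eq_op_smul, map_smul, map_smul, h]

lemma sfun_add (w : List ℕ) (c d : FreeRing') :
    sfun w (c + d) = sfun w c + sfun w d := by
  induction w generalizing c d with
  | nil => simp [sfun, Finsupp.single_add]
  | cons j w ih =>
    have hbr : br (c + d) (x j) = br c (x j) + br d (x j) := by
      simp only [br]; noncomm_ring
    simp only [sfun, hbr, ih, Finsupp.mapDomain_add]
    abel

lemma sfun_zero (w : List ℕ) : sfun w (0 : FreeRing') = 0 := by
  have := sfun_add w 0 0
  simpa using this.symm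

lemma sfun_neg (w : List ℕ) (c : FreeRing') : sfun w (-c) = - sfun w c := by
  have h := sfun_add w c (-c)
  simp [sfun_zero] at h
  exact (neg_eq_of_add_eq_zero_right h.symm).symm

lemma sfun_sub (w : List ℕ) (c d : FreeRing') :
    sfun w (c - d) = sfun w c - sfun w d := by
  rw [sub_eq_add_neg, sfun_add, sfun_neg, sub_eq_add_neg]

@[simp] lemma sfun_nil (c : FreeRing') : sfun [] c = Finsupp.single [] c := rfl
lemma sfun_cons (j : ℕ) (w : List ℕ) (c : FreeRing') :
    sfun (j :: w) c = Cop j (sfun w c) + sfun w (br c (x j)) := rfl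
@[simp] lemma tfun_nil (k : ℕ) : tfun k [] = Finsupp.single [k] 1 := rfl
lemma tfun_cons_le {k j : ℕ} (h : k ≤ j) (w : List ℕ) :
    tfun k (j :: w) = Finsupp.single (k :: j :: w) 1 := by
  simp [tfun, h]
lemma tfun_cons_gt {k j : ℕ} (h : j < k) (w : List ℕ) :
    tfun k (j :: w) = Cop j (tfun k w) + sfun w (br (x k) (x j)) := by
  simp [tfun, Nat.not_le.mpr h]; rfl

-- F3 : SOp past Cop
lemma SOp_Cop (c : FreeRing') (j : ℕ) (f : MM) :
    SOp c (Cop j f) = Cop j (SOp c f) + SOp (br c (x j)) f := by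
  have : SOp c ∘ₗ Cop j = Cop j ∘ₗ SOp c + SOp (br c (x j)) := by
    apply mop_ext; intro w
    simp [sfun_cons, smul_add]
  exact congrFun (congrArg DFunLike.coe this) f

-- F1
lemma TOp_Cop_le {k j : ℕ} (h : k ≤ j) (f : MM) :
    TOp k (Cop j f) = Cop k (Cop j f) := by
  have : TOp k ∘ₗ Cop j = Cop k ∘ₗ Cop j := by
    apply mop_ext; intro w
    simp [tfun_cons_le h]
  exact congrFun (congrArg DFunLike.coe this) f

-- F2
lemma TOp_Cop_gt {k j : ℕ} (h : j < k) (f : MM) :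
    TOp k (Cop j f) = Cop j (TOp k f) + SOp (br (x k) (x j)) f := by
  have : TOp k ∘ₗ Cop j = Cop j ∘ₗ TOp k + SOp (br (x k) (x j)) := by
    apply mop_ext; intro w
    simp [tfun_cons_gt h, smul_add]
  exact congrFun (congrArg DFunLike.coe this) f

-- P3 on basis values
lemma SOp_sfun (w : List ℕ) (c d : FreeRing') :
    SOp c (sfun w d) = sfun w (c * d) := by
  induction w generalizing c d with
  | nil => simp [op_smul_eq_mul]
  | cons j w ih =>
    rw [sfun_cons, map_add, SOp_Cop, ih, ih, ih, sfun_cons]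
    have : br c (x j) * d + c * br d (x j) = br (c * d) (x j) := by
      simp only [br]; noncomm_ring
    rw [← this, sfun_add]
    abel

lemma SOp_SOp (c d : FreeRing') (f : MM) :
    SOp c (SOp d f) = SOp (c * d) f := by
  have : SOp c ∘ₗ SOp d = SOp (c * d) := by
    apply mop_ext; intro w
    simp [SOp_sfun]
  exact congrFun (congrArg DFunLike.coe this) f

lemma sfun_one (w : List ℕ) : sfun w (1 : FreeRing') = Finsupp.single w 1 := by
  induction w with
  | nil => rfl
  | cons j w ih =>
    have : br (1 : FreeRing') (x j) = 0 := by simp [br]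
    rw [sfun_cons, this, sfun_zero, ih, add_zero, Cop_single]

lemma SOp_add (c d : FreeRing') : SOp (c + d) = SOp c + SOp d := by
  apply mop_ext; intro w
  simp [sfun_add, smul_add]

lemma SOp_one : SOp (1 : FreeRing') = LinearMap.id := by
  apply mop_ext; intro w
  simp [sfun_one, ← single_eq_op_smul]

-- support lemmas
lemma sfun_support (w : List ℕ) (c : FreeRing') :
    ∀ u ∈ (sfun w c).support, u.Sublist w := by
  induction w generalizing c with
  | nil =>
    intro u hu
    rcases Finset.mem_singleton.mp (Finsupp.support_single_subset hu) with rfl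
    exact List.Sublist.refl []
  | cons j w ih =>
    intro u hu
    rw [sfun_cons] at hu
    rcases Finset.mem_union.mp (Finsupp.support_add hu) with h | h
    · have := Finsupp.mapDomain_support (f := List.cons j) h
      rcases Finset.mem_image.mp this with ⟨u', hu', rfl⟩
      exact List.Sublist.cons₂ j (ih c u' hu')
    · exact (ih (br c (x j)) u h).cons j

lemma TOp_eq_Cop (k : ℕ) (f : MM) (h : ∀ u ∈ f.support, ∀ a ∈ u, k ≤ a) :
    TOp k f = Cop k f := by
  have h1 : TOp k f = f.sum fun u v => op v • tfun k u := by
    rw [TOp, Finsupp.lsum_apply]; rfl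
  have h2 : Cop k f = f.sum fun u v => Finsupp.single (k :: u) v := rfl
  rw [h1, h2]
  apply Finsupp.sum_congr
  intro u hu
  cases u with
  | nil => simp [tfun, ← single_eq_op_smul]
  | cons a t =>
    have : k ≤ a := h (a::t) hu a (List.mem_cons_self)
    rw [tfun_cons_le this, ← single_eq_op_smul]

lemma br_skew {R : Type*} [Ring R] (a b : R) : br a b = - br b a := by
  simp only [br]; noncomm_ring

lemma P1 : ∀ (w : List ℕ), w.Pairwise (· ≤ ·) → ∀ (c : FreeRing') (k : ℕ),
    SOp c (tfun k w) - TOp k (sfun w c) = sfun w (br c (x k))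
  | [], _, c, k => by
    simp only [tfun_nil, sfun_nil, SOp_single, TOp_single, op_one, one_smul]
    rw [show ([k] : List ℕ) = k :: [] from rfl, sfun_cons, ← single_eq_op_smul]
    simp only [sfun_nil, Cop_single]
    abel
  | j :: w, hw, c, k => by
    obtain ⟨hj, hw'⟩ := List.pairwise_cons.mp hw
    by_cases hkj : k ≤ j
    · rw [tfun_cons_le hkj]
      have hTk : TOp k (sfun (j :: w) c) = Cop k (sfun (j :: w) c) := by
        apply TOp_eq_Cop
        intro u hu a ha
        have hmem : a ∈ j :: w := (sfun_support (j :: w) c u hu).subset ha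
        rcases List.mem_cons.mp hmem with rfl | h
        · exact hkj
        · exact le_trans hkj (hj a h)
      rw [SOp_single, op_one, one_smul, hTk]
      rw [show (k :: j :: w : List ℕ) = k :: (j :: w) from rfl, sfun_cons]
      abel
    · push_neg at hkj
      have e1 : SOp c (tfun k w) = sfun w (br c (x k)) + TOp k (sfun w c) :=
        sub_eq_iff_eq_add.mp (P1 w hw' c k)
      have e2 : SOp (br c (x j)) (tfun k w) =
          sfun w (br (br c (x j)) (x k)) + TOp k (sfun w (br c (x j))) :=
        sub_eq_iff_eq_add.mp (P1 w hw' (br c (x j)) k)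
      have key : sfun w (br (br c (x j)) (x k)) +
          (sfun w (c * br (x k) (x j)) - sfun w (br (x k) (x j) * c)) =
          sfun w (br (br c (x k)) (x j)) := by
        rw [← sfun_sub, ← sfun_add]
        congr 1
        simp only [br]; noncomm_ring
      rw [tfun_cons_gt hkj, sfun_cons (c := c), map_add, map_add, SOp_Cop, TOp_Cop_gt hkj,
        SOp_sfun, SOp_sfun, e1, e2, map_add, sfun_cons (c := br c (x k)), ← key]
      abel

lemma tfun_sorted {i : ℕ} {w : List ℕ} (h : (i :: w).Pairwise (· ≤ ·)) :
    tfun i w = Finsupp.single (i :: w) 1 := by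
  cases w with
  | nil => rfl
  | cons j w => exact tfun_cons_le ((List.pairwise_cons.mp h).1 j (List.mem_cons_self)) w

lemma P0aux : ∀ (w : List ℕ), w.Pairwise (· ≤ ·) → ∀ {i k : ℕ}, i < k →
    TOp i (tfun k w) - TOp k (tfun i w) = sfun w (br (x i) (x k))
  | [], _, i, k, hik => by
    simp only [tfun_nil, TOp_single, op_one, one_smul]
    rw [tfun_cons_le hik.le, tfun_cons_gt hik, tfun_nil, Cop_single,
      br_skew (x i) (x k), sfun_neg]
    simp only [sfun_nil]
    abel
  | j :: w, hw, i, k, hik => by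
    obtain ⟨hj, hw'⟩ := List.pairwise_cons.mp hw
    by_cases hkj : k ≤ j
    · have h1 : tfun k (j :: w) = Finsupp.single (k :: j :: w) 1 := tfun_cons_le hkj w
      have h2 : tfun i (j :: w) = Finsupp.single (i :: j :: w) 1 :=
        tfun_cons_le (le_trans hik.le hkj) w
      rw [h1, h2, TOp_single, TOp_single]
      simp only [op_one, one_smul]
      rw [tfun_cons_le hik.le, tfun_cons_gt hik, h1, Cop_single,
        br_skew (x i) (x k), sfun_neg]
      abel
    · push_neg at hkj
      by_cases hij : i ≤ j
      · -- case (b) : i ≤ j < k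
        have hiw : (i :: w).Pairwise (· ≤ ·) :=
          List.pairwise_cons.mpr ⟨fun b hb => le_trans hij (hj b hb), hw'⟩
        have htiw : tfun i w = Finsupp.single (i :: w) 1 := tfun_sorted hiw
        have e2 := P1 w hw' (br (x k) (x j)) i
        have hS : SOp (br (x k) (x j)) (tfun i w) =
            Cop i (sfun w (br (x k) (x j))) + sfun w (br (br (x k) (x j)) (x i)) := by
          rw [htiw, SOp_single, op_one, one_smul, sfun_cons]
        have eT : TOp i (sfun w (br (x k) (x j))) =
            SOp (br (x k) (x j)) (tfun i w) - sfun w (br (br (x k) (x j)) (x i)) := by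
          rw [← e2]; abel
        rw [tfun_cons_gt hkj, tfun_cons_le hij, map_add, TOp_Cop_le hij, TOp_single,
          op_one, one_smul, tfun_cons_gt hik, tfun_cons_gt hkj, eT, hS, map_add,
          br_skew (x i) (x k), sfun_neg, sfun_cons (c := br (x k) (x i))]
        abel
      · -- case (c) : j < i < k
        push_neg at hij
        have e0 : TOp i (tfun k w) = sfun w (br (x i) (x k)) + TOp k (tfun i w) :=
          sub_eq_iff_eq_add.mp (P0aux w hw' hik)
        have e1 := P1 w hw' (br (x k) (x j)) i
        have e2 := P1 w hw' (br (x i) (x j)) k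
        have eT1 : TOp i (sfun w (br (x k) (x j))) =
            SOp (br (x k) (x j)) (tfun i w) - sfun w (br (br (x k) (x j)) (x i)) := by
          rw [← e1]; abel
        have eT2 : TOp k (sfun w (br (x i) (x j))) =
            SOp (br (x i) (x j)) (tfun k w) - sfun w (br (br (x i) (x j)) (x k)) := by
          rw [← e2]; abel
        have key : sfun w (br (br (x i) (x j)) (x k)) - sfun w (br (br (x k) (x j)) (x i)) =
            sfun w (br (br (x i) (x k)) (x j)) := by
          rw [← sfun_sub]; congr 1; simp only [br]; noncomm_ring
        rw [tfun_cons_gt hkj, tfun_cons_gt hij, map_add, map_add,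
          TOp_Cop_gt hij, TOp_Cop_gt hkj, eT1, eT2, e0, map_add,
          sfun_cons (c := br (x i) (x k)), ← key]
        abel

lemma P0 (w : List ℕ) (hw : w.Pairwise (· ≤ ·)) (i k : ℕ) :
    TOp i (tfun k w) - TOp k (tfun i w) = sfun w (br (x i) (x k)) := by
  rcases lt_trichotomy i k with h | rfl | h
  · exact P0aux w hw h
  · have hz : br (x i) (x i) = 0 := by simp [br]
    rw [hz, sfun_zero, sub_self]
  · have h2 := P0aux w hw h
    rw [br_skew (x i) (x k), sfun_neg, ← h2]
    abel

lemma tfun_support (k : ℕ) : ∀ (w : List ℕ), w.Pairwise (· ≤ ·) →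
    ∀ u ∈ (tfun k w).support, u.Pairwise (· ≤ ·) ∧ ∀ a ∈ u, a = k ∨ a ∈ w
  | [], _ => by
    intro u hu
    rcases Finset.mem_singleton.mp (Finsupp.support_single_subset hu) with rfl
    refine ⟨List.pairwise_singleton _ k, ?_⟩
    intro a ha
    rcases List.mem_singleton.mp ha with rfl
    exact Or.inl rfl
  | j :: w, hw => by
    obtain ⟨hj, hw'⟩ := List.pairwise_cons.mp hw
    intro u hu
    by_cases hkj : k ≤ j
    · rw [tfun_cons_le hkj] at hu
      rcases Finset.mem_singleton.mp (Finsupp.support_single_subset hu) with rfl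
      constructor
      · refine List.pairwise_cons.mpr ⟨?_, hw⟩
        intro b hb
        rcases List.mem_cons.mp hb with rfl | hb
        · exact le_refl b |>.trans_eq' rfl |> fun _ => hkj
        · exact le_trans hkj (hj b hb)
      · intro a ha
        rcases List.mem_cons.mp ha with rfl | ha
        · exact Or.inl rfl
        · exact Or.inr ha
    · push_neg at hkj
      rw [tfun_cons_gt hkj] at hu
      rcases Finset.mem_union.mp (Finsupp.support_add hu) with h | h
    -- mapDomain part
      · have := Finsupp.mapDomain_support (f := List.cons j) h
        rcases Finset.mem_image.mp this with ⟨u', hu', rfl⟩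
        obtain ⟨hsort, hmem⟩ := tfun_support k w hw' u' hu'
        constructor
        · refine List.pairwise_cons.mpr ⟨?_, hsort⟩
          intro b hb
          rcases hmem b hb with rfl | hb'
          · exact hkj.le
          · exact hj b hb'
        · intro a ha
          rcases List.mem_cons.mp ha with rfl | ha
          · exact Or.inr (List.mem_cons_self)
          · rcases hmem a ha with rfl | ha'
            · exact Or.inl rfl
            · exact Or.inr (List.mem_cons_of_mem j ha')
      · have hsub := sfun_support w (br (x k) (x j)) u h
        exact ⟨hw'.sublist hsub, fun a ha => Or.inr (List.mem_cons_of_mem j (hsub.subset ha))⟩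

abbrev EE : Type := Module.End FreeRing'ᵐᵒᵖ MM

noncomputable def lft : FreeRing' →ₐ[ℤ] EE := FreeAlgebra.lift ℤ (fun k => (TOp k : EE))

@[simp] lemma lft_x (k : ℕ) : lft (x k) = TOp k := FreeAlgebra.lift_ι_apply _ _

-- SOp as function of c : additivity etc
lemma SOp_zero : SOp (0 : FreeRing') = 0 := by
  apply mop_ext; intro w; simp [sfun_zero]

lemma SOp_neg (c : FreeRing') : SOp (-c) = - SOp c := by
  apply mop_ext; intro w; simp [sfun_neg]

noncomputable def Good : Subring FreeRing' where
  carrier := {r | ∀ w : List ℕ, w.Pairwise (· ≤ ·) →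
    lft r (Finsupp.single w 1) = SOp r (Finsupp.single w 1)}
  zero_mem' := by intro w _; simp [SOp_zero]
  one_mem' := by intro w _; simp [SOp_one]
  add_mem' := by
    intro a b ha hb w hw
    simp only [map_add, LinearMap.add_apply, SOp_add, ha w hw, hb w hw]
  neg_mem' := by
    intro a ha w hw
    simp only [map_neg, LinearMap.neg_apply, SOp_neg, ha w hw]
  mul_mem' := by
    intro a b ha hb w hw
    have hb' := hb w hw
    rw [map_mul]
    show lft a (lft b (Finsupp.single w 1)) = _
    rw [hb', SOp_single, op_one, one_smul]
    have hgood : ∀ f : MM, (∀ u ∈ f.support, u.Pairwise (· ≤ ·)) → lft a f = SOp a f := by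
      intro f hf
      rw [← Finsupp.sum_single f, map_finsuppSum, map_finsuppSum]
      apply Finsupp.sum_congr
      intro u hu
      rw [single_eq_op_smul, map_smul, map_smul,
        ha u (hf u hu)]
    rw [hgood (sfun w b) (fun u hu => hw.sublist (sfun_support w b u hu))]
    rw [show SOp a (sfun w b) = sfun w (a * b) from SOp_sfun w a b, SOp_single, op_one, one_smul]

lemma mem_good_apply {r : FreeRing'} (hr : r ∈ Good) (f : MM)
    (hf : ∀ u ∈ f.support, u.Pairwise (· ≤ ·)) : lft r f = SOp r f := by
  rw [← Finsupp.sum_single f, map_finsuppSum, map_finsuppSum]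
  apply Finsupp.sum_congr
  intro u hu
  rw [single_eq_op_smul, map_smul, map_smul, hr u (hf u hu)]

lemma br_mem_good {c : FreeRing'} (hc : c ∈ Good) (k : ℕ) : br c (x k) ∈ Good := by
  intro w hw
  have hbr : br c (x k) = c * x k - x k * c := rfl
  rw [hbr, map_sub, map_mul, map_mul]
  simp only [LinearMap.sub_apply, Module.End.mul_apply, lft_x]
  rw [hc w hw]
  simp only [TOp_single, SOp_single, op_one, one_smul]
  rw [mem_good_apply hc (tfun k w) (fun u hu => (tfun_support k w hw u hu).1)]
  exact P1 w hw c k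

lemma base_br_mem_good (i j : ℕ) : br (x i) (x j) ∈ Good := by
  intro w hw
  have hbr : br (x i) (x j) = x i * x j - x j * x i := rfl
  rw [hbr, map_sub, map_mul, map_mul]
  simp only [LinearMap.sub_apply, Module.End.mul_apply, lft_x]
  simp only [TOp_single, SOp_single, op_one, one_smul]
  exact P0 w hw i j

lemma Gamma_le_Good : Gamma ≤ Good := by
  rw [Gamma]
  apply Subring.closure_le.mpr
  rintro g ⟨i, j, rest, rfl⟩
  have : ∀ (rest : List ℕ) (b : FreeRing'), b ∈ Good →
      rest.foldl (fun acc m => br acc (x m)) b ∈ Good := by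
    intro rest
    induction rest with
    | nil => intro b hb; exact hb
    | cons m rest ih => intro b hb; exact ih _ (br_mem_good hb m)
  exact this rest _ (base_br_mem_good i j)

def Gen : Set FreeRing' :=
  {g | ∃ (i j : ℕ) (rest : List ℕ),
    g = rest.foldl (fun acc m => br acc (x m)) (br (x i) (x j))}

lemma gen_br {c : FreeRing'} (hc : c ∈ Gen) (k : ℕ) : br c (x k) ∈ Gen := by
  obtain ⟨i, j, rest, rfl⟩ := hc
  exact ⟨i, j, rest ++ [k], by rw [List.foldl_append]; rfl⟩

lemma mapDomain_cons_val {f : MM} (hf : ∀ v, f v ∈ Gamma) (j : ℕ) (u : List ℕ) :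
    (Finsupp.mapDomain (List.cons j) f) u ∈ Gamma := by
  cases u with
  | nil =>
    rw [Finsupp.mapDomain_notin_range]
    · exact Gamma.zero_mem
    · rintro ⟨a, ha⟩; simp at ha
  | cons a t =>
    by_cases h : a = j
    · subst h
      rw [show (a :: t : List ℕ) = List.cons a t from rfl,
        Finsupp.mapDomain_apply List.cons_injective]
      exact hf t
    · rw [Finsupp.mapDomain_notin_range]
      · exact Gamma.zero_mem
      · rintro ⟨b, hb⟩
        injection hb with h1 _
        exact h h1.symm

lemma sfun_val : ∀ (w : List ℕ) (c : FreeRing'), c ∈ Gen → ∀ u, sfun w c u ∈ Gamma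
  | [], c, hc, u => by
    rw [sfun_nil, Finsupp.single_apply]
    split
    · exact Subring.subset_closure hc
    · exact Gamma.zero_mem
  | j :: w, c, hc, u => by
    rw [sfun_cons, Finsupp.add_apply]
    refine Gamma.add_mem ?_ (sfun_val w (br c (x j)) (gen_br hc j) u)
    exact mapDomain_cons_val (sfun_val w c hc) j u

lemma tfun_val : ∀ (w : List ℕ) (k : ℕ) (u : List ℕ), tfun k w u ∈ Gamma
  | [], k, u => by
    rw [tfun_nil, Finsupp.single_apply]
    split
    · exact Gamma.one_mem
    · exact Gamma.zero_mem
  | j :: w, k, u => by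
    by_cases h : k ≤ j
    · rw [tfun_cons_le h, Finsupp.single_apply]
      split
      · exact Gamma.one_mem
      · exact Gamma.zero_mem
    · push_neg at h
      rw [tfun_cons_gt h, Finsupp.add_apply]
      refine Gamma.add_mem ?_ (sfun_val w (br (x k) (x j)) ⟨k, j, [], rfl⟩ u)
      exact mapDomain_cons_val (tfun_val w k) j u

def PP (f : MM) : Prop :=
  (∀ u ∈ f.support, u.Pairwise (· ≤ ·)) ∧ (∀ u, f u ∈ Gamma)

lemma PP_add {f g : MM} (hf : PP f) (hg : PP g) : PP (f + g) := by
  constructor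
  · intro u hu
    rcases Finset.mem_union.mp (Finsupp.support_add hu) with h | h
    · exact hf.1 u h
    · exact hg.1 u h
  · intro u
    rw [Finsupp.add_apply]
    exact Gamma.add_mem (hf.2 u) (hg.2 u)

lemma TOp_apply_sum (k : ℕ) (f : MM) :
    TOp k f = f.sum fun u v => op v • tfun k u := by
  rw [TOp, Finsupp.lsum_apply]; rfl

lemma PP_TOp (k : ℕ) {f : MM} (hf : PP f) : PP (TOp k f) := by
  constructor
  · intro u hu
    rw [TOp_apply_sum] at hu
    have := Finsupp.support_sum hu
    rcases Finset.mem_biUnion.mp this with ⟨u', hu', hmem⟩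
    have hsub : u ∈ (tfun k u').support := Finsupp.support_smul hmem
    exact (tfun_support k u' (hf.1 u' hu') u hsub).1
  · intro u
    rw [TOp_apply_sum, Finsupp.sum_apply]
    refine sum_mem fun u' hu' => ?_
    show (op (f u') • tfun k u') u ∈ Gamma
    rw [Finsupp.smul_apply, op_smul_eq_mul]
    exact Gamma.mul_mem (tfun_val u' k u) (hf.2 u')

lemma lft_preserves (r : FreeRing') : ∀ f : MM, PP f → PP (lft r f) := by
  induction r using FreeAlgebra.induction with
  | grade0 z =>
    intro f hf
    have h1 : lft ((algebraMap ℤ FreeRing') z) f = z • f := by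
      rw [AlgHom.commutes, Algebra.algebraMap_eq_smul_one]
      rw [LinearMap.smul_apply, Module.End.one_apply]
    rw [h1]
    constructor
    · intro u hu
      exact hf.1 u (Finsupp.support_smul hu)
    · intro u
      rw [Finsupp.smul_apply]
      exact zsmul_mem (hf.2 u) z
  | grade1 k =>
    intro f hf
    rw [show lft (FreeAlgebra.ι ℤ k) = TOp k from FreeAlgebra.lift_ι_apply _ _]
    exact PP_TOp k hf
  | mul a b ha hb =>
    intro f hf
    rw [map_mul]
    exact ha _ (hb f hf)
  | add a b ha hb =>
    intro f hf
    rw [map_add]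
    have hrw : (lft a + lft b) f = lft a f + lft b f := LinearMap.add_apply _ _ _
    rw [hrw]
    exact PP_add (ha f hf) (hb f hf)

noncomputable def piG (r : FreeRing') : FreeRing' := lft r (Finsupp.single [] 1) []

lemma PP_e : PP (Finsupp.single ([] : List ℕ) (1 : FreeRing')) := by
  constructor
  · intro u hu
    rcases Finset.mem_singleton.mp (Finsupp.support_single_subset hu) with rfl
    exact List.Pairwise.nil
  · intro u
    rw [Finsupp.single_apply]
    split
    · exact Gamma.one_mem
    · exact Gamma.zero_mem

lemma piG_mem (r : FreeRing') : piG r ∈ Gamma := (lft_preserves r _ PP_e).2 []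

lemma lft_gamma {γ : FreeRing'} (hγ : γ ∈ Gamma) :
    lft γ (Finsupp.single [] 1) = Finsupp.single [] γ := by
  rw [Gamma_le_Good hγ [] List.Pairwise.nil, SOp_single, op_one, one_smul, sfun_nil]

lemma piG_gamma {γ : FreeRing'} (hγ : γ ∈ Gamma) : piG γ = γ := by
  rw [piG, lft_gamma hγ, Finsupp.single_eq_same]

lemma piG_mul_right (r : FreeRing') {s : FreeRing'} (hs : s ∈ Gamma) :
    piG (r * s) = piG r * s := by
  unfold piG
  rw [map_mul, Module.End.mul_apply, lft_gamma hs, single_eq_op_smul, map_smul,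
    Finsupp.smul_apply, op_smul_eq_mul]

theorem left_ideal_inter_Gamma (S : Set FreeRing') (hS : S ⊆ (Gamma : Set FreeRing')) :
    (Ideal.span S : Set FreeRing') ∩ (Gamma : Set FreeRing') =
      (AddSubgroup.closure {y : FreeRing' | ∃ g ∈ Gamma, ∃ s ∈ S, y = g * s} :
        Set FreeRing') := by
  apply Set.Subset.antisymm
  · rintro u ⟨hu1, hu2⟩
    have key : ∀ v, v ∈ Ideal.span S → ∀ r : FreeRing',
        piG (r * v) ∈ AddSubgroup.closure
          {y : FreeRing' | ∃ g ∈ Gamma, ∃ s ∈ S, y = g * s} := by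
      intro v hv
      induction hv using Submodule.span_induction with
      | mem s hs =>
        intro r
        rw [piG_mul_right r (hS hs)]
        exact AddSubgroup.subset_closure ⟨piG r, piG_mem r, s, hs, rfl⟩
      | zero =>
        intro r
        rw [mul_zero]
        have h0 : piG 0 = 0 := by simp [piG]
        rw [h0]; exact AddSubgroup.zero_mem _
      | add v w hv hw ihv ihw =>
        intro r
        rw [mul_add]
        have hadd : piG (r * v + r * w) = piG (r * v) + piG (r * w) := by
          simp only [piG, map_add]
          rw [LinearMap.add_apply, Finsupp.add_apply]
        rw [hadd]
        exact AddSubgroup.add_mem _ (ihv r) (ihw r)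
      | smul a v hv ih =>
        intro r
        rw [smul_eq_mul, ← mul_assoc]
        exact ih (r * a)
    have h1 := key u hu1 1
    rw [one_mul, piG_gamma hu2] at h1
    exact h1
  · have hle : AddSubgroup.closure {y : FreeRing' | ∃ g ∈ Gamma, ∃ s ∈ S, y = g * s} ≤
        (Ideal.span S).toAddSubgroup ⊓ Gamma.toAddSubgroup := by
      apply (AddSubgroup.closure_le _).mpr
      rintro y ⟨g, hg, s, hs, rfl⟩
      refine AddSubgroup.mem_inf.mpr ⟨?_, ?_⟩
      · exact Ideal.mul_mem_left _ g (Ideal.subset_span hs)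
      · exact Gamma.mul_mem hg (hS hs)
    intro y hy
    have h2 := hle hy
    exact ⟨(AddSubgroup.mem_inf.mp h2).1, (AddSubgroup.mem_inf.mp h2).2⟩
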